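/- Let n ≥ 1 and fix a row index i. The number of equi-n-squares whose row i is a permutation of {1,…,n} (i.e. the map j ↦ g i j is a bijection of Fin n) equals n! · (n²−n)! / ((n−1)!)^n. Consequently, the total count over all equi-n-squares ω of the number of lines (rows or columns) of ω that are permutations equals 2n · n! · (n²−n)! / ((n−1)!)^n. -/

import Mathlib

open Nat Finset Filter

/-- An equi-`n`-square: an `n × n` array with entries in `Fin n` in which
every value appears exactly `n` times. -/
def IsEquiSquare (n : ℕ) (g : Fin n → Fin n → Fin n) : Prop :=
  ∀ k : Fin n, Nat.card {p : Fin n × Fin n // g p.1 p.2 = k} = n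

/-- Row `i` is consecutive (1-indexed: entry in column `j` is `j`). -/
def RowConsec {n : ℕ} (g : Fin n → Fin n → Fin n) (i : Fin n) : Prop :=
  ∀ j : Fin n, g i j = j

/-- Row `i` is reverse-consecutive (1-indexed: entry in column `j` is `n+1-j`). -/
def RowRevConsec {n : ℕ} (g : Fin n → Fin n → Fin n) (i : Fin n) : Prop :=
  ∀ j : Fin n, (g i j : ℕ) + (j : ℕ) + 1 = n

/-- Column `j` is consecutive (1-indexed: entry in row `i` is `i`). -/
def ColConsec {n : ℕ} (g : Fin n → Fin n → Fin n) (j : Fin n) : Prop :=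
  ∀ i : Fin n, g i j = i

/-- Column `j` is reverse-consecutive (1-indexed: entry in row `i` is `n+1-i`). -/
def ColRevConsec {n : ℕ} (g : Fin n → Fin n → Fin n) (j : Fin n) : Prop :=
  ∀ i : Fin n, (g i j : ℕ) + (i : ℕ) + 1 = n

lemma nat_card_sigma {ι : Type*} [Fintype ι] (f : ι → Type*) [∀ i, Finite (f i)] :
    Nat.card (Σ i, f i) = ∑ i, Nat.card (f i) := by
  have : ∀ i, Fintype (f i) := fun i => Fintype.ofFinite _
  simp [Nat.card_eq_fintype_card, Fintype.card_sigma]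

lemma fibCount {β : Type} [Fintype β] [DecidableEq β] (c : β → ℕ) (s : Finset β) :
    ∀ (α : Type) [Fintype α] [DecidableEq α], ∑ b ∈ s, c b = Fintype.card α →
    Nat.card {f : α → β // ∀ b : β,
        Nat.card {x : α // f x = b} = if b ∈ s then c b else 0}
      = Nat.multinomial s c := by
  classical
  induction s using Finset.induction_on with
  | empty =>
    intro α _ _ h
    simp only [sum_empty] at h
    haveI : IsEmpty α := Fintype.card_eq_zero_iff.mp h.symm
    haveI : Unique {f : α → β // ∀ b : β,
        Nat.card {x : α // f x = b} = if b ∈ (∅ : Finset β) then c b else 0} :=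
      { default := ⟨fun x => isEmptyElim x, fun b => by
          simp [Nat.card_of_isEmpty]⟩
        uniq := fun f => Subtype.ext (funext fun x => isEmptyElim x) }
    rw [Nat.multinomial_empty]
    exact Nat.card_unique
  | @insert a s ha ih =>
    intro α _ _ h
    simp only [sum_insert ha] at h
    set P : (α → β) → Prop := fun f => ∀ b : β,
        Nat.card {x : α // f x = b} = if b ∈ insert a s then c b else 0 with hP
    have cardfib : ∀ (f : α → β) (b : β),
        Nat.card {x : α // f x = b} = (univ.filter fun x => f x = b).card := fun f b => by
      rw [Nat.card_eq_fintype_card, Fintype.card_subtype]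
    set Φ : {f : α → β // P f} → {T : Finset α // T.card = c a} := fun f =>
      ⟨univ.filter fun x => f.1 x = a, by
        rw [← cardfib, f.2 a, if_pos (mem_insert_self a s)]⟩ with hΦ
    have e1 : {f : α → β // P f} ≃ Σ T : {T : Finset α // T.card = c a},
        {p : {f : α → β // P f} // Φ p = T} := (Equiv.sigmaFiberEquiv Φ).symm
    rw [Nat.card_congr e1, nat_card_sigma]
    have key : ∀ T : {T : Finset α // T.card = c a},
        Nat.card {p : {f : α → β // P f} // Φ p = T} = Nat.multinomial s c := by
      intro T
      set Q : ({x : α // x ∉ T.1} → β) → Prop := fun g => ∀ b : β,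
        Nat.card {y : {x : α // x ∉ T.1} // g y = b} = if b ∈ s then c b else 0 with hQ
      have hmem : ∀ (p : {f : α → β // P f}), Φ p = T → ∀ x : α, x ∈ T.1 ↔ p.1 x = a := by
        intro p hp x
        have := congrArg Subtype.val hp
        simp only [hΦ] at this
        rw [← this]; simp
      have hga : ∀ (g : {g : {x : α // x ∉ T.1} → β // Q g}) (y), g.1 y ≠ a := by
        intro g y hy
        have h0 := g.2 a
        rw [if_neg ha] at h0
        have hne : Nonempty {y' : {x : α // x ∉ T.1} // g.1 y' = a} := ⟨⟨y, hy⟩⟩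
        have := Nat.card_pos (α := {y' : {x : α // x ∉ T.1} // g.1 y' = a})
        omega
      have e2 : {p : {f : α → β // P f} // Φ p = T} ≃ {g : {x : α // x ∉ T.1} → β // Q g} := by
        refine ⟨fun p => ⟨fun x => p.1.1 x.1, ?_⟩, fun g => ⟨⟨fun x =>
            if hx : x ∈ T.1 then a else g.1 ⟨x, hx⟩, ?_⟩, ?_⟩, ?_, ?_⟩
        · -- restriction satisfies Q
          intro b
          by_cases hb : b = a
          · subst hb
            haveI : IsEmpty {y : {x : α // x ∉ T.1} // p.1.1 y.1 = b} :=
              ⟨fun y => y.1.2 ((hmem p.1 p.2 y.1.1).mpr y.2)⟩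
            simp [Nat.card_of_isEmpty, ha]
          · have e3 : {y : {x : α // x ∉ T.1} // p.1.1 y.1 = b} ≃ {x : α // p.1.1 x = b} :=
              ⟨fun y => ⟨y.1.1, y.2⟩,
               fun x => ⟨⟨x.1, fun hx => hb (x.2.symm.trans ((hmem p.1 p.2 x.1).mp hx))⟩, x.2⟩,
               fun y => by ext; rfl, fun x => by ext; rfl⟩
            rw [Nat.card_congr e3, p.1.2 b]
            simp [mem_insert, hb]
        · -- extension satisfies P
          intro b
          by_cases hb : b = a
          · subst hb
            have e4 : {x : α // (if hx : x ∈ T.1 then b else g.1 ⟨x, hx⟩) = b} ≃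
                {x : α // x ∈ T.1} :=
              Equiv.subtypeEquivRight (fun x => by
                constructor
                · intro hx; by_contra hT; rw [dif_neg hT] at hx; exact hga g _ hx
                · intro hT; rw [dif_pos hT])
            rw [Nat.card_congr e4, if_pos (mem_insert_self b s)]
            exact (Nat.card_eq_finsetCard T.1).trans T.2
          · have e5 : {x : α // (if hx : x ∈ T.1 then a else g.1 ⟨x, hx⟩) = b} ≃
                {y : {x : α // x ∉ T.1} // g.1 y = b} := by
              refine ⟨fun x => ⟨⟨x.1, fun hT => hb ?_⟩, ?_⟩,
                fun y => ⟨y.1.1, by rw [dif_neg y.1.2]; exact y.2⟩,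
                fun x => by ext; rfl, fun y => by ext <;> rfl⟩
              · have := x.2; rw [dif_pos hT] at this; exact this.symm
              · have := x.2
                rw [dif_neg] at this
                exact this
            rw [Nat.card_congr e5, g.2 b]
            simp [mem_insert, hb]
        · -- Φ of extension = T
          apply Subtype.ext
          ext x
          simp only [hΦ, mem_filter, mem_univ, true_and]
          constructor
          · intro hx
            by_contra hT
            rw [dif_neg hT] at hx
            exact hga g _ hx
          · intro hT; rw [dif_pos hT]
        · -- left inverse
          intro p
          apply Subtype.ext; apply Subtype.ext
          funext x
          dsimp only
          split_ifs with hx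
          · exact ((hmem p.1 p.2 x).mp hx).symm
          · rfl
        · -- right inverse
          intro g
          apply Subtype.ext
          funext x
          cases x with
          | mk x hx => simp [dif_neg hx]
      rw [Nat.card_congr e2]
      exact ih _ (by
        have : Fintype.card {x : α // x ∉ T.1} = Fintype.card α - c a := by
          rw [Fintype.card_subtype_compl]
          simp [Fintype.card_subtype, T.2]
        omega)
    rw [Finset.sum_congr rfl (fun T _ => key T), Finset.sum_const, smul_eq_mul,
      Finset.card_univ, Fintype.card_finset_len, Nat.multinomial_insert ha, ← h]

lemma fiber_split {n : ℕ} (g : Fin n → Fin n → Fin n) (i : Fin n) (k : Fin n) :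
    Nat.card {p : Fin n × Fin n // g p.1 p.2 = k} =
      Nat.card {j : Fin n // g i j = k} +
      Nat.card {x : {p : Fin n × Fin n // p.1 ≠ i} // g x.1.1 x.1.2 = k} := by
  rw [← Nat.card_sum]
  refine Nat.card_congr ⟨fun p => if h : p.1.1 = i then Sum.inl ⟨p.1.2, by rw [← h]; exact p.2⟩
      else Sum.inr ⟨⟨p.1, h⟩, p.2⟩, Sum.elim (fun j => ⟨(i, j.1), j.2⟩) (fun x => ⟨x.1.1, x.2⟩),
      ?_, ?_⟩
  · intro p
    dsimp only
    by_cases h : p.1.1 = i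
    · rw [dif_pos h]
      apply Subtype.ext
      exact Prod.ext h.symm rfl
    · rw [dif_neg h]
      rfl
  · intro x
    cases x with
    | inl j => simp
    | inr x =>
      dsimp only [Sum.elim_inr]
      rw [dif_neg x.1.2]

lemma row_fiber_one {n : ℕ} (g : Fin n → Fin n → Fin n) (i : Fin n)
    (hb : Function.Bijective (g i)) (k : Fin n) :
    Nat.card {j : Fin n // g i j = k} = 1 := by
  set σ := Equiv.ofBijective (g i) hb with hσ
  have : ∀ j : Fin n, g i j = k ↔ j = σ.symm k := by
    intro j
    constructor
    · intro h; apply σ.injective; rw [Equiv.apply_symm_apply]; exact h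
    · intro h; subst h; exact σ.apply_symm_apply k
  rw [Nat.card_congr (Equiv.subtypeEquivRight this)]
  simp [Nat.card_eq_fintype_card]

noncomputable def rowEquiv (n : ℕ) (hn : 1 ≤ n) (i : Fin n) :
    {g : Fin n → Fin n → Fin n // IsEquiSquare n g ∧ Function.Bijective (g i)} ≃
    (Fin n ≃ Fin n) × {f : {p : Fin n × Fin n // p.1 ≠ i} → Fin n //
      ∀ b : Fin n, Nat.card {x : {p : Fin n × Fin n // p.1 ≠ i} // f x = b}
        = if b ∈ (univ : Finset (Fin n)) then n - 1 else 0} where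
  toFun g := ⟨Equiv.ofBijective (g.1 i) g.2.2, ⟨fun x => g.1 x.1.1 x.1.2, by
    intro b
    have := fiber_split g.1 i b
    rw [g.2.1 b, row_fiber_one g.1 i g.2.2 b] at this
    simp only [mem_univ, if_true]
    omega⟩⟩
  invFun x := ⟨fun r c => if h : r = i then x.1 c else x.2.1 ⟨(r, c), h⟩, by
    constructor
    · intro k
      have hs := fiber_split (fun r c => if h : r = i then x.1 c else x.2.1 ⟨(r, c), h⟩) i k
      have h1 : Nat.card {j : Fin n // (if h : i = i then x.1 j else x.2.1 ⟨(i, j), h⟩) = k}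
          = 1 := by
        have : ∀ j : Fin n, (if h : i = i then x.1 j else x.2.1 ⟨(i, j), h⟩) = k ↔
            x.1 j = k := fun j => by rw [dif_pos rfl]
        rw [Nat.card_congr (Equiv.subtypeEquivRight this)]
        exact row_fiber_one (fun _ c => x.1 c) i x.1.bijective k
      have h2 : Nat.card {y : {p : Fin n × Fin n // p.1 ≠ i} //
          (if h : y.1.1 = i then x.1 y.1.2 else x.2.1 ⟨(y.1.1, y.1.2), h⟩) = k} = n - 1 := by
        have : ∀ y : {p : Fin n × Fin n // p.1 ≠ i},
            (if h : y.1.1 = i then x.1 y.1.2 else x.2.1 ⟨(y.1.1, y.1.2), h⟩) = k ↔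
            x.2.1 y = k := fun y => by
          rw [dif_neg y.2]
        rw [Nat.card_congr (Equiv.subtypeEquivRight this)]
        simpa using x.2.2 k
      rw [h1, h2] at hs
      exact hs.trans (by omega)
    · have : (fun c => if h : i = i then x.1 c else x.2.1 ⟨(i, c), h⟩) = fun c => x.1 c := by
        funext c; rw [dif_pos rfl]
      show Function.Bijective (fun c => if h : i = i then x.1 c else x.2.1 ⟨(i, c), h⟩)
      rw [this]
      exact x.1.bijective⟩
  left_inv g := by
    apply Subtype.ext
    funext r c
    dsimp only
    split_ifs with h
    · subst h; rfl
    · rfl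
  right_inv x := by
    refine Prod.ext ?_ ?_
    · apply Equiv.ext
      intro c
      simp [Equiv.ofBijective_apply]
    · apply Subtype.ext
      funext y
      simp only
      rw [dif_neg y.2]

lemma IsEquiSquare.comp {n : ℕ} {g : Fin n → Fin n → Fin n} (hg : IsEquiSquare n g)
    (e : Equiv.Perm (Fin n × Fin n)) :
    IsEquiSquare n (fun a b => g (e (a, b)).1 (e (a, b)).2) := by
  intro k
  exact (Nat.card_congr (Equiv.subtypeEquiv e (fun p => Iff.rfl))).trans (hg k)

def rowSwapEquiv (n : ℕ) (i r : Fin n) :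
    {g : Fin n → Fin n → Fin n // IsEquiSquare n g ∧ Function.Bijective (g r)} ≃
    {g : Fin n → Fin n → Fin n // IsEquiSquare n g ∧ Function.Bijective (g i)} where
  toFun g := ⟨fun a b => g.1 (Equiv.swap i r a) b, by
    constructor
    · exact g.2.1.comp (Equiv.prodCongr (Equiv.swap i r) (Equiv.refl _))
    · show Function.Bijective fun b => g.1 (Equiv.swap i r i) b
      rw [Equiv.swap_apply_left]
      exact g.2.2⟩
  invFun g := ⟨fun a b => g.1 (Equiv.swap i r a) b, by
    constructor
    · exact g.2.1.comp (Equiv.prodCongr (Equiv.swap i r) (Equiv.refl _))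
    · show Function.Bijective fun b => g.1 (Equiv.swap i r r) b
      rw [Equiv.swap_apply_right]
      exact g.2.2⟩
  left_inv g := by
    apply Subtype.ext
    funext a b
    simp [Equiv.swap_apply_self]
  right_inv g := by
    apply Subtype.ext
    funext a b
    simp [Equiv.swap_apply_self]

def colEquiv (n : ℕ) (i j : Fin n) :
    {g : Fin n → Fin n → Fin n // IsEquiSquare n g ∧ Function.Bijective fun r => g r j} ≃
    {g : Fin n → Fin n → Fin n // IsEquiSquare n g ∧ Function.Bijective (g i)} where
  toFun g := ⟨fun a b => g.1 b (Equiv.swap j i a), by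
    constructor
    · exact g.2.1.comp ((Equiv.prodCongr (Equiv.swap j i) (Equiv.refl _)).trans
        (Equiv.prodComm _ _))
    · show Function.Bijective fun b => g.1 b (Equiv.swap j i i)
      rw [Equiv.swap_apply_right]
      exact g.2.2⟩
  invFun g := ⟨fun a b => g.1 (Equiv.swap j i b) a, by
    constructor
    · exact g.2.1.comp ((Equiv.prodCongr (Equiv.refl _) (Equiv.swap j i)).trans
        (Equiv.prodComm _ _))
    · show Function.Bijective fun r => g.1 (Equiv.swap j i j) r
      rw [Equiv.swap_apply_left]
      exact g.2.2⟩
  left_inv g := by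
    apply Subtype.ext
    funext a b
    simp [Equiv.swap_apply_self]
  right_inv g := by
    apply Subtype.ext
    funext a b
    simp [Equiv.swap_apply_self]

/-- The number of equi-`n`-squares whose row `i` is a permutation equals
`n!·(n²−n)!/((n−1)!)^n`; consequently, the total count, over all equi-`n`-squares,
of lines (rows or columns) that are permutations equals `2n·n!·(n²−n)!/((n−1)!)^n`. -/
theorem card_equiSquares_permutation_row (n : ℕ) (hn : 1 ≤ n) (i : Fin n) :
    (Nat.card {g : Fin n → Fin n → Fin n //
        IsEquiSquare n g ∧ Function.Bijective (g i)} : ℚ) =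
      (n ! : ℚ) * ((n ^ 2 - n)! : ℚ) / ((n - 1)! : ℚ) ^ n ∧
    (Nat.card {x : (Fin n → Fin n → Fin n) × (Fin n ⊕ Fin n) //
        IsEquiSquare n x.1 ∧
          Sum.elim (fun r => Function.Bijective (x.1 r))
            (fun c => Function.Bijective fun r => x.1 r c) x.2} : ℚ) =
      2 * (n : ℚ) * (n ! : ℚ) * ((n ^ 2 - n)! : ℚ) / ((n - 1)! : ℚ) ^ n := by
  have hmul : n * (n - 1) = n ^ 2 - n := by
    rw [Nat.mul_sub, pow_two]
    ring_nf
  have hsum : ∑ _b : Fin n, (n - 1) = Fintype.card {p : Fin n × Fin n // p.1 ≠ i} := by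
    have hci : Fintype.card {p : Fin n × Fin n // p.1 = i} = n := by
      have e : {p : Fin n × Fin n // p.1 = i} ≃ Fin n :=
        ⟨fun p => p.1.2, fun j => ⟨(i, j), rfl⟩,
         fun p => Subtype.ext (Prod.ext p.2.symm rfl), fun j => rfl⟩
      rw [Fintype.card_congr e, Fintype.card_fin]
    have hcc : Fintype.card {p : Fin n × Fin n // p.1 ≠ i} = n * n - n := by
      have := Fintype.card_subtype_compl (fun p : Fin n × Fin n => p.1 = i)
      rw [hci] at this
      simpa using this
    rw [hcc]
    simp only [Finset.sum_const, Finset.card_univ, Fintype.card_fin, smul_eq_mul]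
    rw [Nat.mul_sub]
    ring_nf
  have hN : Nat.card {g : Fin n → Fin n → Fin n //
      IsEquiSquare n g ∧ Function.Bijective (g i)}
      = n ! * Nat.multinomial univ (fun _ : Fin n => n - 1) := by
    rw [Nat.card_congr (rowEquiv n hn i), Nat.card_prod]
    congr 1
    · rw [Nat.card_eq_fintype_card]
      simp [Fintype.card_perm]
    · exact fibCount (fun _ => n - 1) univ _ hsum
  have hspec := Nat.multinomial_spec (univ : Finset (Fin n)) (fun _ => n - 1)
  have h1 : (∏ _b : Fin n, (n - 1)!) = ((n - 1)!) ^ n := by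
    simp [Finset.prod_const, Finset.card_univ]
  have h2 : (∑ _b : Fin n, (n - 1)) = n ^ 2 - n := by
    simp only [Finset.sum_const, Finset.card_univ, Fintype.card_fin, smul_eq_mul]
    exact hmul
  rw [h1, h2] at hspec
  have hY : ((n - 1)! : ℚ) ^ n ≠ 0 := by positivity
  have hM : ((Nat.multinomial univ (fun _ : Fin n => n - 1) : ℕ) : ℚ)
      = ((n ^ 2 - n)! : ℚ) / ((n - 1)! : ℚ) ^ n := by
    rw [eq_div_iff hY]
    rw [mul_comm]
    exact_mod_cast hspec
  have part1 : (Nat.card {g : Fin n → Fin n → Fin n //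
      IsEquiSquare n g ∧ Function.Bijective (g i)} : ℚ) =
      (n ! : ℚ) * ((n ^ 2 - n)! : ℚ) / ((n - 1)! : ℚ) ^ n := by
    rw [hN, Nat.cast_mul, hM, mul_div_assoc]
  refine ⟨part1, ?_⟩
  have esig : {x : (Fin n → Fin n → Fin n) × (Fin n ⊕ Fin n) //
      IsEquiSquare n x.1 ∧
        Sum.elim (fun r => Function.Bijective (x.1 r))
          (fun c => Function.Bijective fun r => x.1 r c) x.2} ≃
      Σ l : Fin n ⊕ Fin n, {g : Fin n → Fin n → Fin n //
        IsEquiSquare n g ∧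
          Sum.elim (fun r => Function.Bijective (g r))
            (fun c => Function.Bijective fun r => g r c) l} :=
    ⟨fun x => ⟨x.1.2, ⟨x.1.1, x.2⟩⟩, fun y => ⟨(y.2.1, y.1), y.2.2⟩,
     fun x => rfl, fun y => rfl⟩
  have hcomp : ∀ l : Fin n ⊕ Fin n,
      Nat.card {g : Fin n → Fin n → Fin n //
        IsEquiSquare n g ∧
          Sum.elim (fun r => Function.Bijective (g r))
            (fun c => Function.Bijective fun r => g r c) l}
      = Nat.card {g : Fin n → Fin n → Fin n //
          IsEquiSquare n g ∧ Function.Bijective (g i)} := by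
    intro l
    cases l with
    | inl r => exact Nat.card_congr (rowSwapEquiv n i r)
    | inr j => exact Nat.card_congr (colEquiv n i j)
  have h2c : Nat.card {x : (Fin n → Fin n → Fin n) × (Fin n ⊕ Fin n) //
      IsEquiSquare n x.1 ∧
        Sum.elim (fun r => Function.Bijective (x.1 r))
          (fun c => Function.Bijective fun r => x.1 r c) x.2}
      = (n + n) * Nat.card {g : Fin n → Fin n → Fin n //
          IsEquiSquare n g ∧ Function.Bijective (g i)} := by
    rw [Nat.card_congr esig, nat_card_sigma]
    rw [Finset.sum_congr rfl (fun l _ => hcomp l), Finset.sum_const, smul_eq_mul,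
      Finset.card_univ]
    simp [Fintype.card_sum]
  rw [h2c, Nat.cast_mul, part1]
  push_cast
  ring
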